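/- arXiv:2002.12136 — 9 statements merged into one kernel-verified Lean document; each statement's English description precedes it below -/
import Mathlib

section
/- For the Lucas sequence u_n(A,B) and any natural numbers k, n, r, the identity u_{kn+r}(A,B) = \sum_{j=0}^{n} C(n,j) * (u_{k+1}(A,B) - A*u_k(A,B))^{n-j} * u_k(A,B)^j * u_{j+r}(A,B) holds. -/
def lucasU (A B : ℤ) : ℕ → ℤ
  | 0 => 0
  | 1 => 1
  | (n+2) => A * lucasU A B (n+1) - B * lucasU A B n

namespace LucasAux

lemma icast (z : ℤ) (i j : Fin 2) :
    ((z : Matrix (Fin 2) (Fin 2) ℤ)) i j = if i = j then z else 0 := by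
  rw [← Matrix.diagonal_intCast]; simp [Matrix.diagonal_apply]

def M (A B : ℤ) : Matrix (Fin 2) (Fin 2) ℤ := !![A, -B; 1, 0]

lemma pow_M (A B : ℤ) (m : ℕ) :
    (M A B) ^ m = (lucasU A B (m+1) - A * lucasU A B m) • (1 : Matrix (Fin 2) (Fin 2) ℤ)
      + (lucasU A B m) • M A B := by
  induction m with
  | zero => simp [lucasU]
  | succ m ih =>
    rw [pow_succ, ih]
    ext i j
    fin_cases i <;> fin_cases j <;>
      simp [M, Matrix.mul_apply, Fin.sum_univ_two, Matrix.one_apply, lucasU, icast] <;> (first | ring1 | exact Or.inl (by ring1))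

lemma entry (A B a b : ℤ) :
    (a • (1 : Matrix (Fin 2) (Fin 2) ℤ) + b • M A B) 1 0 = b := by
  simp [M, Matrix.one_apply, icast]

end LucasAux

theorem stmt_0 (A B : ℤ) (k n r : ℕ) :
    lucasU A B (k*n + r) =
      ∑ j ∈ Finset.range (n+1),
        (n.choose j : ℤ) * (lucasU A B (k+1) - A * lucasU A B k)^(n-j) *
          (lucasU A B k)^j * lucasU A B (j+r) := by
  set c : ℤ := lucasU A B (k+1) - A * lucasU A B k with hc
  set u : ℤ := lucasU A B k with hu
  have hcomm : Commute ((lucasU A B k) • LucasAux.M A B)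
      (c • (1 : Matrix (Fin 2) (Fin 2) ℤ)) :=
    (Commute.one_right _).smul_right c
  have key : (LucasAux.M A B) ^ (k*n + r) =
      ∑ j ∈ Finset.range (n+1),
        ((n.choose j : ℤ) * c^(n-j) * u^j) • (LucasAux.M A B) ^ (j+r) := by
    rw [pow_add, pow_mul, LucasAux.pow_M A B k, ← hc, add_comm,
      hcomm.add_pow, Finset.sum_mul]
    refine Finset.sum_congr rfl (fun j hj => ?_)
    have hcast : ((n.choose j : ℕ) : Matrix (Fin 2) (Fin 2) ℤ)
        = ((n.choose j : ℤ)) • (1 : Matrix (Fin 2) (Fin 2) ℤ) := by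
      simp [zsmul_eq_mul]
    rw [hcast, smul_pow, smul_pow, one_pow, ← hu]
    rw [smul_mul_smul_comm, smul_mul_smul_comm, smul_mul_assoc]
    rw [mul_one, mul_one, ← pow_add]
    congr 1
    ring
  have lhs : lucasU A B (k*n+r) = ((LucasAux.M A B) ^ (k*n+r)) 1 0 := by
    rw [LucasAux.pow_M, LucasAux.entry]
  rw [lhs, key, Matrix.sum_apply]
  refine Finset.sum_congr rfl (fun j hj => ?_)
  rw [LucasAux.pow_M A B (j+r), Matrix.smul_apply, LucasAux.entry, smul_eq_mul]
end

section
/- Let A, B, M be integers with M \ne 0. Then B is relatively prime to M if and only if there exists a positive integer n such that u_n(A,B) \equiv 0 (mod M) and u_{n+1}(A,B) \equiv 1 (mod M). -/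
theorem stmt_1 (A B M : ℤ) (hM : M ≠ 0) :
    IsCoprime B M ↔ ∃ n : ℕ, 0 < n ∧ lucasU A B n ≡ 0 [ZMOD M] ∧
      lucasU A B (n+1) ≡ 1 [ZMOD M] := by
  constructor
  · intro hcop
    set m := M.natAbs with hm
    haveI : NeZero m := ⟨Int.natAbs_ne_zero.mpr hM⟩
    have hM0 : (M : ZMod m) = 0 := by
      rw [ZMod.intCast_zmod_eq_zero_iff_dvd]
      exact Int.natAbs_dvd.mpr dvd_rfl
    obtain ⟨u, w, huw⟩ := hcop
    have hBunit : IsUnit ((B : ZMod m)) := by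
      refine IsUnit.of_mul_eq_one (a := (B : ZMod m)) ((u : ZMod m)) ?_
      have h := congrArg (fun x : ℤ => (x : ZMod m)) huw
      push_cast at h
      rw [hM0] at h
      linear_combination h
    set v : ℕ → ZMod m := fun n => ((lucasU A B n : ℤ) : ZMod m) with hv
    set p : ℕ → ZMod m × ZMod m := fun n => (v n, v (n+1)) with hp
    set g : ZMod m × ZMod m → ZMod m × ZMod m :=
      fun q => (q.2, (A : ZMod m) * q.2 - (B : ZMod m) * q.1) with hg
    have hstep : ∀ n, p (n+1) = g (p n) := by
      intro n
      simp only [hp, hg, hv, Prod.mk.injEq]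
      constructor
      · trivial
      · show ((lucasU A B (n+2) : ℤ) : ZMod m) = _
        rw [show lucasU A B (n+2) = A * lucasU A B (n+1) - B * lucasU A B n from rfl]
        push_cast
        ring
    have ginj : Function.Injective g := by
      intro a b hab
      simp only [hg, Prod.mk.injEq] at hab
      obtain ⟨h2, h1⟩ := hab
      have : (B : ZMod m) * a.1 = (B : ZMod m) * b.1 := by
        rw [h2] at h1; linear_combination -h1
      exact Prod.ext (hBunit.mul_left_cancel this) h2
    obtain ⟨i, j, hij, hpe⟩ := Finite.exists_ne_map_eq_of_infinite p
    wlog hlt : i < j generalizing i j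
    · exact this j i hij.symm hpe.symm (by omega)
    set d := j - i with hd
    have key : ∀ k, p (k + d) = p k → p d = p 0 := by
      intro k
      induction k with
      | zero => intro h; simpa using h
      | succ k ih =>
        intro h
        apply ih
        apply ginj
        rw [← hstep, ← hstep]
        rw [show k + 1 + d = (k + d) + 1 from by omega] at h
        exact h
    have hpd : p d = p 0 := key i (by rw [show i + d = j from by omega]; exact hpe.symm)
    have hconv : ∀ a b : ℤ, ((a : ZMod m) = (b : ZMod m)) → a ≡ b [ZMOD M] := by
      intro a b h
      have h2 := (ZMod.intCast_eq_intCast_iff _ _ _).mp h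
      rwa [Int.modEq_iff_dvd, Int.natAbs_dvd, ← Int.modEq_iff_dvd] at h2
    refine ⟨d, by omega, ?_, ?_⟩
    · have : v d = v 0 := congrArg Prod.fst hpd
      have h0 : v 0 = ((0 : ℤ) : ZMod m) := by simp [hv, lucasU]
      exact hconv _ _ (this.trans h0)
    · have : v (d+1) = v 1 := congrArg Prod.snd hpd
      have h1 : v 1 = ((1 : ℤ) : ZMod m) := by simp [hv, lucasU]
      exact hconv _ _ (this.trans h1)
  · rintro ⟨n, hn, h0, h1⟩
    obtain ⟨k, rfl⟩ : ∃ k, n = k + 1 := ⟨n - 1, by omega⟩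
    obtain ⟨c, hc⟩ := (Int.modEq_zero_iff_dvd).mp h0
    obtain ⟨e, he⟩ := h1.dvd
    rw [show lucasU A B (k+1+1) = A * lucasU A B (k+1) - B * lucasU A B k from rfl] at he
    exact ⟨-lucasU A B k, e + A * c, by linear_combination -he - A * hc⟩
end

section
/- Let A be an integer with A \ge 2. Then natural numbers x, y with x \ge y satisfy x^2 - A*x*y + y^2 = 1 if and only if there exists a natural number n with x = u_{n+1}(A,1) and y = u_n(A,1). -/
lemma lucas_eq (A : ℤ) : ∀ n : ℕ,
    (lucasU A 1 (n+1))^2 - A*(lucasU A 1 (n+1))*(lucasU A 1 n) + (lucasU A 1 n)^2 = 1 := by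
  intro n
  induction n with
  | zero => simp [lucasU]
  | succ n ih =>
    have h2 : lucasU A 1 (n+2) = A * lucasU A 1 (n+1) - 1 * lucasU A 1 n := rfl
    rw [h2]
    linear_combination ih

lemma forward_aux (A : ℤ) (hA : 2 ≤ A) : ∀ k : ℕ, ∀ x : ℤ, (k:ℤ) ≤ x →
    x^2 - A*x*(k:ℤ) + (k:ℤ)^2 = 1 →
    ∃ n : ℕ, x = lucasU A 1 (n+1) ∧ (k:ℤ) = lucasU A 1 n := by
  intro k
  induction k using Nat.strong_induction_on with
  | _ k ih =>
    intro x hxk h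
    rcases Nat.eq_zero_or_pos k with hk | hk
    · subst hk
      have hx0 : (0:ℤ) ≤ x := by exact_mod_cast hxk
      have hx1 : x = 1 := by push_cast at h; nlinarith
      exact ⟨0, by simpa [lucasU] using hx1, by simp [lucasU]⟩
    · have hk1 : (1:ℤ) ≤ (k:ℤ) := by exact_mod_cast hk
      have hxpos : (0:ℤ) < x := by linarith
      set y' : ℤ := A * k - x with hy'
      have hmul : x * y' = (k:ℤ)^2 - 1 := by rw [hy']; ring_nf; linarith [h]
      have hy'0 : 0 ≤ y' := by nlinarith
      have hy'k : y' < k := by nlinarith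
      obtain ⟨m, hm⟩ : ∃ m : ℕ, (m:ℤ) = y' := ⟨y'.toNat, Int.toNat_of_nonneg hy'0⟩
      have hmk : m < k := by exact_mod_cast hm ▸ hy'k
      have heq : (k:ℤ)^2 - A*(k:ℤ)*(m:ℤ) + (m:ℤ)^2 = 1 := by
        rw [hm, hy']; linear_combination h
      obtain ⟨n, h1, h2⟩ := ih m hmk (k:ℤ) (by exact_mod_cast hmk.le) heq
      refine ⟨n+1, ?_, h1⟩
      have h3 : lucasU A 1 (n+2) = A * lucasU A 1 (n+1) - 1 * lucasU A 1 n := rfl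
      rw [h3, ← h1, ← h2, hm, hy']
      ring

theorem stmt_3 (A : ℤ) (hA : 2 ≤ A) (x y : ℤ) (hy : 0 ≤ y) (hxy : y ≤ x) :
    x^2 - A*x*y + y^2 = 1 ↔ ∃ n : ℕ, x = lucasU A 1 (n+1) ∧ y = lucasU A 1 n := by
  constructor
  · intro h
    obtain ⟨k, rfl⟩ := Int.eq_ofNat_of_zero_le hy
    exact forward_aux A hA k x hxy h
  · rintro ⟨n, rfl, rfl⟩
    exact lucas_eq A n
end

section
/- If x and y are Gaussian integers (elements of Z[i]) satisfying x^2 - 4*x*y + y^2 = 1, then both x and y are rational integers (i.e., their imaginary parts are zero). -/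
private lemma gauss_norm_nonneg (z : GaussianInt) : 0 ≤ z.norm :=
  Zsqrtd.norm_nonneg (by norm_num) z

private lemma pell_key : ∀ n : ℕ, ∀ u v : GaussianInt, v.norm.natAbs = n →
    u^2 = 1 + 3*v^2 → u.im = 0 ∧ v.im = 0 := by
  intro n
  induction n using Nat.strong_induction_on with
  | _ n ih =>
    intro u v hn h
    have hre : u.re*u.re - u.im*u.im = 1 + 3*(v.re*v.re - v.im*v.im) ∧
        2*(u.re*u.im) = 3*(2*(v.re*v.im)) := by
      rw [Zsqrtd.ext_iff] at h
      simp [pow_two, Zsqrtd.re_mul, Zsqrtd.im_mul] at h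
      constructor <;> linarith [h.1, h.2]
    obtain ⟨h1, h2⟩ := hre
    by_cases hsmall : v.norm ≤ 1
    · -- small case: v ∈ {0, ±1, ±i}
      have hvnorm : v.re*v.re + v.im*v.im ≤ 1 := by
        have := hsmall; simp [Zsqrtd.norm_def] at this; linarith
      have hvim : v.im = 0 := by
        by_contra hne
        have him2 : 1 ≤ v.im * v.im := by
          rcases lt_or_gt_of_ne hne with hl | hl <;> nlinarith
        have hre0 : v.re = 0 := by nlinarith [sq_nonneg v.re]
        have him2' : v.im * v.im = 1 := by nlinarith [sq_nonneg v.re]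
        rw [hre0] at h1 h2
        simp at h2
        rcases h2 with h0 | h0
        · rw [h0] at h1
          have hq1 : -2 ≤ u.im := by nlinarith
          have hq2 : u.im ≤ 2 := by nlinarith
          interval_cases u.im <;> omega
        · rw [h0] at h1; nlinarith [sq_nonneg u.re]
      refine ⟨?_, hvim⟩
      rw [hvim] at h1 h2
      simp at h2
      rcases h2 with h0 | h0
      · exfalso; rw [h0] at h1; nlinarith [sq_nonneg u.im, sq_nonneg v.re]
      · exact h0
    · -- descent
      push_neg at hsmall
      set a := (2*v - u).norm with ha
      set b := (2*v + u).norm with hb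
      have hna : 0 ≤ a := gauss_norm_nonneg _
      have hnb : 0 ≤ b := gauss_norm_nonneg _
      have hnu : 0 ≤ u.norm := gauss_norm_nonneg _
      have hsum : a + b = 8*v.norm + 2*u.norm := by
        simp [ha, hb, Zsqrtd.norm_def, Zsqrtd.re_sub, Zsqrtd.im_sub, Zsqrtd.re_add,
          Zsqrtd.im_add, Zsqrtd.re_mul, Zsqrtd.im_mul]
        ring
      have hprodeq : a * b = (v*v - 1).norm := by
        rw [ha, hb, ← Zsqrtd.norm_mul]
        congr 1
        linear_combination -h
      have hprodle : (v*v-1).norm ≤ v.norm^2 + 2*v.norm + 1 := by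
        simp [Zsqrtd.norm_def, Zsqrtd.re_sub, Zsqrtd.im_sub, Zsqrtd.re_mul, Zsqrtd.im_mul]
        nlinarith [sq_nonneg v.re, sq_nonneg v.im, sq_nonneg (v.re*v.im)]
      have hmin : a < v.norm ∨ b < v.norm := by
        by_contra hcon
        push_neg at hcon
        nlinarith [mul_nonneg (sub_nonneg.mpr hcon.1) (sub_nonneg.mpr hcon.2)]
      rcases hmin with hlt | hlt
      · have hlt' : (2*v - u).norm.natAbs < n := by
          have ha1 := Int.natAbs_of_nonneg hna
          have ha2 := Int.natAbs_of_nonneg (gauss_norm_nonneg v)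
          omega
        have heq' : (2*u - 3*v)^2 = 1 + 3*(2*v - u)^2 := by linear_combination h
        obtain ⟨hu', hv'⟩ := ih _ hlt' (2*u - 3*v) (2*v - u) rfl heq'
        simp [Zsqrtd.im_add, Zsqrtd.im_sub, Zsqrtd.im_mul, Zsqrtd.re_mul] at hu' hv'
        constructor <;> omega
      · have hlt' : (2*v + u).norm.natAbs < n := by
          have ha1 := Int.natAbs_of_nonneg hnb
          have ha2 := Int.natAbs_of_nonneg (gauss_norm_nonneg v)
          omega
        have heq' : (2*u + 3*v)^2 = 1 + 3*(2*v + u)^2 := by linear_combination h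
        obtain ⟨hu', hv'⟩ := ih _ hlt' (2*u + 3*v) (2*v + u) rfl heq'
        simp [Zsqrtd.im_add, Zsqrtd.im_sub, Zsqrtd.im_mul, Zsqrtd.re_mul] at hu' hv'
        constructor <;> omega

theorem stmt_4 (x y : GaussianInt) (h : x^2 - 4*x*y + y^2 = 1) :
    x.im = 0 ∧ y.im = 0 := by
  obtain ⟨h1, h2⟩ := pell_key ((y : GaussianInt).norm.natAbs) (x - 2*y) y rfl
    (by linear_combination h)
  simp [Zsqrtd.im_sub, Zsqrtd.im_mul, Zsqrtd.re_mul] at h1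
  exact ⟨by omega, h2⟩
end

section
/- A Gaussian integer z is a rational integer if and only if there exist Gaussian integers v, w, x, y with v \ne 0 such that (4*(2*v*(2*(2z+1)^2+1) - y)^2 - 3*y^2 - 1)^2 + 2*(w^2 - 1 - 3*y^2*(2z+1 - x*y)^2)^2 = 0. -/
/-- descent: b² = 3 d² → b = d = 0 over ℤ -/
lemma sq_eq_three_sq : ∀ n : ℕ, ∀ b d : ℤ, b.natAbs = n → b^2 = 3*d^2 → b = 0 ∧ d = 0 := by
  intro n
  induction n using Nat.strong_induction_on with
  | _ n ih =>
    intro b d hn h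
    rcases eq_or_ne b 0 with hb | hb
    · subst hb
      constructor
      · rfl
      · have : d^2 = 0 := by linarith
        exact pow_eq_zero_iff (by norm_num) |>.mp this
    · exfalso
      have h3 : (3:ℤ) ∣ b := by
        have hp : Prime (3:ℤ) := by norm_num
        have : (3:ℤ) ∣ b^2 := ⟨d^2, h⟩
        exact hp.dvd_of_dvd_pow this
      obtain ⟨b1, rfl⟩ := h3
      have hd : d^2 = 3*b1^2 := by nlinarith
      have h3d : (3:ℤ) ∣ d := by
        have hp : Prime (3:ℤ) := by norm_num
        exact hp.dvd_of_dvd_pow ⟨b1^2, hd⟩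
      obtain ⟨d1, rfl⟩ := h3d
      have hb1 : b1^2 = 3*d1^2 := by nlinarith
      have hlt : b1.natAbs < n := by
        subst hn
        have : b1 ≠ 0 := by rintro rfl; simp at hb
        have h1 : 1 ≤ b1.natAbs := Int.natAbs_pos.mpr this
        have : (3*b1).natAbs = 3 * b1.natAbs := by simp [Int.natAbs_mul]
        omega
      have := ih _ hlt b1 d1 rfl hb1
      exact hb (by simp [this.1])

/-- descent over ℤ for the Gaussian split -/
lemma int_split : ∀ n : ℕ, ∀ p q r s : ℤ, p.natAbs + q.natAbs + r.natAbs + s.natAbs = n →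
    p^2 - q^2 + 2*r^2 - 2*s^2 = 0 → p*q + 2*r*s = 0 → p = 0 ∧ q = 0 ∧ r = 0 ∧ s = 0 := by
  intro n
  induction n using Nat.strong_induction_on with
  | _ n ih =>
    intro p q r s hn h1 h2
    -- parity via ZMod 2
    have hp2 : ((p : ZMod 2) = 0 ∧ (q : ZMod 2) = 0) := by
      have e1 : ((p:ZMod 2))^2 - ((q:ZMod 2))^2 + 2*((r:ZMod 2))^2 - 2*((s:ZMod 2))^2 = 0 := by
        have := congrArg (Int.cast : ℤ → ZMod 2) h1; push_cast at this; exact this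
      have e2 : (p:ZMod 2)*(q:ZMod 2) + 2*((r:ZMod 2))*(s:ZMod 2) = 0 := by
        have := congrArg (Int.cast : ℤ → ZMod 2) h2; push_cast at this; exact this
      revert e1 e2; generalize (p:ZMod 2) = P; generalize (q:ZMod 2) = Q
      generalize (r:ZMod 2) = R; generalize (s:ZMod 2) = S
      revert P Q R S; decide
    have hpdvd : (2:ℤ) ∣ p := by
      have := (ZMod.intCast_zmod_eq_zero_iff_dvd p 2).mp hp2.1; exact_mod_cast this
    have hqdvd : (2:ℤ) ∣ q := by
      have := (ZMod.intCast_zmod_eq_zero_iff_dvd q 2).mp hp2.2; exact_mod_cast this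
    obtain ⟨p1, rfl⟩ := hpdvd
    obtain ⟨q1, rfl⟩ := hqdvd
    have hr2 : ((r : ZMod 2) = 0 ∧ (s : ZMod 2) = 0) := by
      have e1 : 2*((p1:ZMod 2))^2 - 2*((q1:ZMod 2))^2 + ((r:ZMod 2))^2 - ((s:ZMod 2))^2 = 0 := by
        have h1' : 2*p1^2 - 2*q1^2 + r^2 - s^2 = 0 := by nlinarith
        have := congrArg (Int.cast : ℤ → ZMod 2) h1'; push_cast at this; exact this
      have e2 : 2*(p1:ZMod 2)*(q1:ZMod 2) + ((r:ZMod 2))*(s:ZMod 2) = 0 := by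
        have h2' : 2*p1*q1 + r*s = 0 := by nlinarith
        have := congrArg (Int.cast : ℤ → ZMod 2) h2'; push_cast at this; exact this
      revert e1 e2; generalize (p1:ZMod 2) = P; generalize (q1:ZMod 2) = Q
      generalize (r:ZMod 2) = R; generalize (s:ZMod 2) = S
      revert P Q R S; decide
    have hrdvd : (2:ℤ) ∣ r := by
      have := (ZMod.intCast_zmod_eq_zero_iff_dvd r 2).mp hr2.1; exact_mod_cast this
    have hsdvd : (2:ℤ) ∣ s := by
      have := (ZMod.intCast_zmod_eq_zero_iff_dvd s 2).mp hr2.2; exact_mod_cast this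
    obtain ⟨r1, rfl⟩ := hrdvd
    obtain ⟨s1, rfl⟩ := hsdvd
    have h1' : p1^2 - q1^2 + 2*r1^2 - 2*s1^2 = 0 := by nlinarith
    have h2' : p1*q1 + 2*r1*s1 = 0 := by nlinarith
    rcases Nat.eq_zero_or_pos n with hz | hpos
    · subst hz
      have := hn
      simp [Int.natAbs_mul] at this
      refine ⟨?_, ?_, ?_, ?_⟩ <;> [skip; skip; skip; skip] <;>
        (first | (have : p1 = 0 := by omega) | skip)
      all_goals omega
    · have hm : p1.natAbs + q1.natAbs + r1.natAbs + s1.natAbs < n := by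
        have e : ∀ t : ℤ, (2*t).natAbs = 2 * t.natAbs := fun t => by simp [Int.natAbs_mul]
        rw [e, e, e, e] at hn
        omega
      obtain ⟨a,b,c,d⟩ := ih _ hm p1 q1 r1 s1 rfl h1' h2'
      subst a; subst b; subst c; subst d
      simp

lemma pell_real (X Y : GaussianInt) (h : X^2 - 3*Y^2 = 1) : X.im = 0 ∧ Y.im = 0 := by
  have hre := congrArg Zsqrtd.re h
  have him := congrArg Zsqrtd.im h
  simp [pow_two, Zsqrtd.re_mul, Zsqrtd.im_mul] at hre him
  set a := X.re with ha; set b := X.im with hb; set c := Y.re with hc; set d := Y.im with hd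
  have key : (a^2+b^2-3*c^2-3*d^2)^2 + 3*(2*(a*d-b*c))^2 = 1 := by
    linear_combination (a*a - b*b - 3*(c*c-d*d) + 1) * hre + (a*b + b*a - 3*(c*d+d*c)) * him
  have hs0 : a*d - b*c = 0 := by nlinarith [sq_nonneg (a^2+b^2-3*c^2-3*d^2), sq_nonneg (2*(a*d-b*c))]
  have hr2 : (a^2+b^2-3*c^2-3*d^2)^2 = 1 := by nlinarith
  have hr : a^2+b^2-3*c^2-3*d^2 = 1 ∨ a^2+b^2-3*c^2-3*d^2 = -1 := by
    have : (a^2+b^2-3*c^2-3*d^2 - 1) * (a^2+b^2-3*c^2-3*d^2 + 1) = 0 := by linear_combination hr2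
    rcases mul_eq_zero.mp this with h' | h'
    · exact Or.inl (by linarith)
    · exact Or.inr (by linarith)
  rcases hr with hr | hr
  · -- b² = 3 d²
    have : b^2 = 3*d^2 := by nlinarith
    obtain ⟨hb0, hd0⟩ := sq_eq_three_sq _ b d rfl this
    exact ⟨hb0, hd0⟩
  · -- a² = 3c², then contradiction mod 3
    exfalso
    have hac : a^2 = 3*c^2 := by nlinarith
    obtain ⟨ha0, hc0⟩ := sq_eq_three_sq _ a c rfl hac
    have hbe : -b^2 + 3*d^2 = 1 := by nlinarith
    have h3 : -((b:ZMod 3))^2 + 3*((d:ZMod 3))^2 = 1 := by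
      have := congrArg (Int.cast : ℤ → ZMod 3) hbe; push_cast at this; exact this
    revert h3; generalize (b : ZMod 3) = B; generalize (d : ZMod 3) = D
    revert B D; decide

lemma gauss_split (A B : GaussianInt) (h : A^2 + 2*B^2 = 0) : A = 0 ∧ B = 0 := by
  have hre := congrArg Zsqrtd.re h
  have him := congrArg Zsqrtd.im h
  simp [pow_two, Zsqrtd.re_mul, Zsqrtd.im_mul] at hre him
  have h1 : A.re^2 - A.im^2 + 2*B.re^2 - 2*B.im^2 = 0 := by ring_nf; ring_nf at hre; linarith
  obtain ⟨a,b,c,d⟩ := int_split _ A.re A.im B.re B.im rfl h1 (by linarith)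
  constructor <;> (ext <;> simp [a,b,c,d])

private def e3 : Zsqrtd 3 := ⟨2, 1⟩
private def e3' : Zsqrtd 3 := ⟨2, -1⟩

lemma e3_mul : e3 * e3' = 1 := by ext <;> simp [e3, e3', Zsqrtd.re_mul, Zsqrtd.im_mul]

lemma e3_re : e3.re = 2 := rfl
lemma e3_im : e3.im = 1 := rfl

lemma e3_pell (j : ℕ) : ((e3^j).re)^2 - 3*((e3^j).im)^2 = 1 := by
  have hn : (e3^j).norm = 1 := by
    induction j with
    | zero => simp
    | succ k ih => rw [pow_succ, Zsqrtd.norm_mul, ih, one_mul]; simp [Zsqrtd.norm_def, e3]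
  rw [Zsqrtd.norm_def] at hn
  ring_nf; ring_nf at hn; linarith

lemma e3_pos (j : ℕ) : 1 ≤ (e3^j).re ∧ 0 ≤ (e3^j).im := by
  induction j with
  | zero => simp
  | succ k ih =>
    obtain ⟨h1, h2⟩ := ih
    rw [pow_succ, Zsqrtd.re_mul, Zsqrtd.im_mul, e3_re, e3_im]
    constructor <;> nlinarith

/-- binomial-type expansion of powers in ℤ√3 -/
lemma pow_form (A : Zsqrtd 3) : ∀ K : ℕ, ∃ c₁ c₂ : ℤ,
    (A^(K+1)).re = A.re^(K+1) + A.im^2 * c₁ ∧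
    (A^(K+1)).im = (K+1)*A.re^K*A.im + A.im^3*c₂ := by
  intro K
  induction K with
  | zero => exact ⟨0, 0, by simp, by simp⟩
  | succ k ih =>
    obtain ⟨c₁, c₂, h1, h2⟩ := ih
    refine ⟨c₁*A.re + 3*(k+1)*A.re^k + 3*A.im^2*c₂, c₁ + c₂*A.re, ?_, ?_⟩
    · rw [pow_succ, Zsqrtd.re_mul, h1, h2]; push_cast; ring
    · rw [pow_succ, Zsqrtd.im_mul, h1, h2]; push_cast; ring

lemma exists_period (M : ℤ) (hM : 2 ≤ M) : ∃ T : ℕ, 1 ≤ T ∧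
    (e3^T).re ≡ 1 [ZMOD M] ∧ (e3^T).im ≡ 0 [ZMOD M] := by
  have hM0 : M.toNat ≠ 0 := by omega
  haveI : NeZero M.toNat := ⟨hM0⟩
  obtain ⟨j, k, hne, hjk⟩ := Finite.exists_ne_map_eq_of_infinite (fun j : ℕ =>
      (((e3^j).re : ZMod M.toNat), ((e3^j).im : ZMod M.toNat)))
  wlog hlt : k < j generalizing j k
  · exact this k j (Ne.symm hne) hjk.symm (by omega)
  have hcast : ∀ a b : ℤ, ((a : ZMod M.toNat) = b) ↔ a ≡ b [ZMOD M] := by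
    intro a b
    rw [ZMod.intCast_eq_intCast_iff, Int.toNat_of_nonneg (by omega : (0:ℤ) ≤ M)]
  have hre : (e3^j).re ≡ (e3^k).re [ZMOD M] := by
    rw [← hcast]; exact congrArg Prod.fst hjk
  have him : (e3^j).im ≡ (e3^k).im [ZMOD M] := by
    rw [← hcast]; exact congrArg Prod.snd hjk
  have key : e3^(j-k) = e3^j * e3'^k := by
    have h1 : e3^(j-k) * (e3^k * e3'^k) = (e3^j) * e3'^k := by
      rw [← mul_assoc, ← pow_add, Nat.sub_add_cancel (le_of_lt hlt)]
    calc e3^(j-k) = e3^(j-k) * ((e3*e3')^k) := by rw [e3_mul, one_pow, mul_one]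
    _ = e3^(j-k) * (e3^k * e3'^k) := by rw [mul_pow]
    _ = e3^j * e3'^k := h1
  have hone : (1 : Zsqrtd 3) = e3^k * e3'^k := by rw [← mul_pow, e3_mul, one_pow]
  refine ⟨j - k, by omega, ?_, ?_⟩
  · rw [key, Zsqrtd.re_mul]
    have h2 : (e3^j).re * (e3'^k).re + 3*((e3^j).im*(e3'^k).im)
        ≡ (e3^k).re * (e3'^k).re + 3*((e3^k).im*(e3'^k).im) [ZMOD M] :=
      (hre.mul_right _).add ((him.mul_right _).mul_left 3)
    have h3 : (e3^k).re * (e3'^k).re + 3*((e3^k).im*(e3'^k).im) = 1 := by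
      have := congrArg Zsqrtd.re hone
      rw [Zsqrtd.re_mul] at this
      simp at this ⊢; linarith
    rw [h3] at h2
    calc (e3 ^ j).re * (e3' ^ k).re + 3 * (e3 ^ j).im * (e3' ^ k).im
        = (e3^j).re * (e3'^k).re + 3*((e3^j).im*(e3'^k).im) := by ring
    _ ≡ 1 [ZMOD M] := h2
  · rw [key, Zsqrtd.im_mul]
    have h2 : (e3^j).re * (e3'^k).im + (e3^j).im*(e3'^k).re
        ≡ (e3^k).re * (e3'^k).im + (e3^k).im*(e3'^k).re [ZMOD M] :=
      (hre.mul_right _).add (him.mul_right _)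
    have h3 : (e3^k).re * (e3'^k).im + (e3^k).im*(e3'^k).re = 0 := by
      have := congrArg Zsqrtd.im hone
      rw [Zsqrtd.im_mul] at this
      simp at this ⊢; linarith
    rw [h3] at h2
    exact h2

lemma real_of_im_zero (t : GaussianInt) (h : t.im = 0) : t = (t.re : GaussianInt) := by
  ext <;> simp [h]

lemma norm_int_cast (g : ℤ) : ((g : GaussianInt)).norm = g*g := by
  simp [Zsqrtd.norm_def]

set_option maxHeartbeats 1000000 in
lemma backward (z : GaussianInt) (v w x y : GaussianInt) (hv : v ≠ 0)
    (h : (4*(2*v*(2*(2*z+1)^2+1) - y)^2 - 3*y^2 - 1)^2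
        + 2*(w^2 - 1 - 3*y^2*(2*z+1 - x*y)^2)^2 = 0) : z.im = 0 := by
  set m : GaussianInt := 2*z+1 with hm
  set D : GaussianInt := 2*m^2+1 with hD
  obtain ⟨hA, hB⟩ := gauss_split _ _ h
  have hp1 : (2*(2*v*D - y))^2 - 3*y^2 = 1 := by linear_combination hA
  have hp2 : w^2 - 3*(y*(m - x*y))^2 = 1 := by linear_combination hB
  obtain ⟨hX1, hyim⟩ := pell_real _ _ hp1
  obtain ⟨hwim, hSim⟩ := pell_real _ _ hp2
  have hDne : D ≠ 0 := by
    intro h0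
    have h1 : (2:GaussianInt)*m^2 = -1 := by rw [hD] at h0; linear_combination h0
    have h2 := congrArg Zsqrtd.norm h1
    rw [Zsqrtd.norm_mul] at h2
    have hn2 : (2 : GaussianInt).norm = 4 := by simp [Zsqrtd.norm_def]
    have hn1 : ((-1 : GaussianInt)).norm = 1 := by simp [Zsqrtd.norm_def]
    rw [hn2, hn1] at h2
    have := Zsqrtd.norm_nonneg (by norm_num : (-1:ℤ) ≤ 0) (m^2)
    have h4 : (4:ℤ) ∣ 1 := ⟨(m^2).norm, h2.symm⟩
    omega
  have hvD : (v*D).im = 0 := by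
    have h1 : (2*(2*v*D - y)).im = 0 := hX1
    have h2 : (2*(2*v*D - y)).im = 4*(v*D).im - 2*y.im := by
      simp [Zsqrtd.im_mul, Zsqrtd.re_mul]; ring
    rw [h2, hyim] at h1
    linarith
  set y₀ := y.re with hy₀
  set g := (v*D).re with hg
  have hyc : y = (y₀ : GaussianInt) := real_of_im_zero y hyim
  have hvDc : v*D = (g : GaussianInt) := real_of_im_zero _ hvD
  have hgne : g ≠ 0 := by
    intro h0
    rw [h0] at hvDc
    push_cast at hvDc
    rcases mul_eq_zero.mp hvDc with h' | h'
    · exact hv h'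
    · exact hDne h'
  set X₀ : ℤ := 4*g - 2*y₀ with hX₀
  have hcast : ((X₀ : GaussianInt)) = 2*(2*v*D - y) := by
    have : (2:GaussianInt)*(2*v*D - y) = 4*(v*D) - 2*y := by ring
    rw [this, hvDc, hyc, hX₀]; push_cast; ring
  have hpint : X₀^2 - 3*y₀^2 = 1 := by
    rw [← hcast, hyc] at hp1
    exact_mod_cast hp1
  -- y₀ ≠ 0
  have hy₀ne : y₀ ≠ 0 := by
    intro h0
    have hX : X₀ = 4*g := by rw [hX₀, h0]; ring
    have hg1 : 1 ≤ g^2 := by rcases lt_or_gt_of_ne hgne with h'|h' <;> nlinarith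
    rw [h0, hX] at hpint
    nlinarith
  have hy1 : 1 ≤ y₀^2 := by
    rcases lt_or_gt_of_ne hy₀ne with h' | h' <;> nlinarith
  -- g² ≤ y₀²
  have hgy : g^2 ≤ y₀^2 := by
    have h4g : X₀ + 2*y₀ = 4*g := by rw [hX₀]; ring
    have h16 : 16*g^2 = (X₀+2*y₀)^2 := by linear_combination (-(X₀+2*y₀)-4*g)*h4g
    nlinarith [hpint, sq_nonneg (X₀ - 2*y₀), hy1, h16]
  -- norm D ≤ g²
  have hnormD : D.norm ≤ g^2 := by
    have h1 : (g:GaussianInt) = D * v := by rw [← hvDc]; ring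
    have h2 := congrArg Zsqrtd.norm h1
    rw [Zsqrtd.norm_mul, norm_int_cast] at h2
    have hvn : 1 ≤ v.norm := by
      have h0 := Zsqrtd.norm_nonneg (by norm_num : (-1:ℤ) ≤ 0) v
      have : v.norm ≠ 0 := fun hh => hv ((Zsqrtd.norm_eq_zero (by intro n; nlinarith [sq_nonneg n, mul_self_nonneg n]) v).mp hh)
      omega
    have hDn : 0 ≤ D.norm := Zsqrtd.norm_nonneg (by norm_num) D
    nlinarith
  -- y₀ ∣ 2 z.im
  set zr := z.re with hzr
  set zi := z.im with hzi
  have hdvd : 2*zi = x.im * y₀ := by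
    have h1 : (y * (m - x*y)).im = y₀ * ((2*zi) - x.im*y₀) := by
      rw [hyc, hm]
      simp only [pow_two, Zsqrtd.im_mul, Zsqrtd.re_mul, Zsqrtd.im_add, Zsqrtd.re_add,
        Zsqrtd.im_sub, Zsqrtd.re_sub, Zsqrtd.re_intCast, Zsqrtd.im_intCast,
        Zsqrtd.re_one, Zsqrtd.im_one, Zsqrtd.re_ofNat, Zsqrtd.im_ofNat]
      ring
    have h2 := h1.symm.trans hSim
    rcases mul_eq_zero.mp h2 with h' | h'
    · exact absurd h' hy₀ne
    · linarith
  -- norm D components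
  have hDim : D.im = 8*zi*(2*zr+1) := by
    rw [hD, hm]
    simp only [pow_two, Zsqrtd.im_mul, Zsqrtd.re_mul, Zsqrtd.im_add, Zsqrtd.re_add,
      Zsqrtd.re_one, Zsqrtd.im_one, Zsqrtd.re_ofNat, Zsqrtd.im_ofNat]
    ring
  have hDnormval : D.norm = D.re^2 + D.im^2 := by
    rw [Zsqrtd.norm_def]; ring
  clear h hA hB hp1 hp2 hX1 hvD hcast hyc hvDc hSim hwim hyim hDne hgne
  -- final contradiction
  by_contra hzine
  have hzi1 : 1 ≤ zi^2 := by
    rcases lt_or_gt_of_ne hzine with h' | h' <;> nlinarith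
  have hxim : x.im ≠ 0 := by
    intro h0; rw [h0] at hdvd; simp at hdvd; omega
  have hxim1 : 1 ≤ x.im^2 := by
    rcases lt_or_gt_of_ne hxim with h' | h' <;> nlinarith
  have hy4 : y₀^2 ≤ 4*zi^2 := by
    have hsq : 4*zi^2 = x.im^2*y₀^2 := by linear_combination (2*zi + x.im*y₀)*hdvd
    nlinarith [hsq, mul_nonneg (by linarith : (0:ℤ) ≤ x.im^2 - 1) (sq_nonneg y₀)]
  have hodd : 1 ≤ (2*zr+1)^2 := by
    have h0 : (2*zr+1) ≠ 0 := by omega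
    rcases lt_or_gt_of_ne h0 with h'|h' <;> nlinarith
  have hDbig : 64*zi^2 ≤ D.norm := by
    rw [hDnormval, hDim]
    nlinarith [sq_nonneg D.re, mul_le_mul_of_nonneg_left hodd (sq_nonneg zi)]
  linarith [hDbig, hnormD, hgy, hy4, hzi1]


set_option maxHeartbeats 1000000 in
lemma forward_int (z₀ : ℤ) : ∃ c W x' Y : ℤ, c ≠ 0 ∧
    4*(2*c*(2*(2*z₀+1)^2+1) - Y)^2 - 3*Y^2 - 1 = 0 ∧
    W^2 - 1 - 3*Y^2*((2*z₀+1) - x'*Y)^2 = 0 := by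
  set m : ℤ := 2*z₀+1 with hm
  set D : ℤ := 2*m^2+1 with hDdef
  have hD3 : 3 ≤ D := by
    have : m ≠ 0 := by omega
    have h1 : 1 ≤ m^2 := by rcases lt_or_gt_of_ne this with h'|h' <;> nlinarith
    omega
  set M : ℤ := 4*D with hMdef
  have hM : 2 ≤ M := by omega
  obtain ⟨T, hT1, hTre, hTim⟩ := exists_period M hM
  set n : ℕ := T - 1 with hn
  have hTn : T = n + 1 := by omega
  set X : ℤ := (e3^n).re with hX
  set Y₁ : ℤ := (e3^n).im with hY₁
  have hpell : X^2 - 3*Y₁^2 = 1 := e3_pell n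
  have hXpos : 1 ≤ X := (e3_pos n).1
  have hY₁pos : 0 ≤ Y₁ := (e3_pos n).2
  -- e3^n = e3^T * e3'
  have hstep : e3^n = e3^T * e3' := by
    have : e3^T = e3^n * e3 := by rw [hTn, pow_succ]
    rw [this, mul_assoc, e3_mul, mul_one]
  have hXn : X = 2*(e3^T).re - 3*(e3^T).im := by
    rw [hX, hstep, Zsqrtd.re_mul]
    show (e3^T).re * (2:ℤ) + 3 * (e3^T).im * (-1) = _
    ring
  have hYn : Y₁ = 2*(e3^T).im - (e3^T).re := by
    rw [hY₁, hstep, Zsqrtd.im_mul]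
    show (e3^T).re * (-1:ℤ) + (e3^T).im * 2 = _
    ring
  have hXm : X ≡ 2 [ZMOD M] := by
    rw [hXn]
    calc 2*(e3^T).re - 3*(e3^T).im ≡ 2*1 - 3*0 [ZMOD M] := (hTre.mul_left 2).sub (hTim.mul_left 3)
    _ = 2 := by ring
  have hYm : Y₁ ≡ -1 [ZMOD M] := by
    rw [hYn]
    calc 2*(e3^T).im - (e3^T).re ≡ 2*0 - 1 [ZMOD M] := (hTim.mul_left 2).sub hTre
    _ = -1 := by ring
  set Y : ℤ := -Y₁ with hY
  -- M ∣ X + 2 Y₁ ... i.e. (-X) + 2Y ≡ 0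
  have hdvd0 : M ∣ (-X + 2*Y) := by
    have h1 : (-X + 2*Y) ≡ -2 + 2*(-(-1)) [ZMOD M] := by
      have := (hXm.neg.add ((hYm.neg).mul_left 2))
      simpa [hY] using this
    have h2 : (-X + 2*Y) ≡ 0 [ZMOD M] := by simpa using h1
    exact (Int.modEq_zero_iff_dvd).mp h2
  obtain ⟨c, hc⟩ := hdvd0
  have hcne : c ≠ 0 := by
    intro h0
    rw [h0, mul_zero] at hc
    have : X + 2*Y₁ = 0 := by rw [hY] at hc; linarith
    linarith
  -- Y ≠ 0
  have hYne : Y ≠ 0 := by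
    intro h0
    have h1 : Y₁ = 0 := by rw [hY] at h0; linarith
    have h2 : (0:ℤ) ≡ -1 [ZMOD M] := h1 ▸ hYm
    have h3 : M ∣ -1 - 0 := h2.dvd
    have h4 : M ∣ (1:ℤ) := dvd_neg.mp (by simpa using h3)
    have := Int.le_of_dvd one_pos h4
    omega
  have hY1pos' : 1 ≤ Y₁ := by
    rcases eq_or_lt_of_le hY₁pos with h'|h'
    · exfalso; exact hYne (by rw [hY, ← h']; ring)
    · omega
  have hE1 : 4*(2*c*D - Y)^2 - 3*Y^2 - 1 = 0 := by
    have hhalf : 2*(2*c*D - Y) = -X := by linear_combination -hc - c*hMdef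
    linear_combination hpell + (2*(2*c*D - Y) - X)*hhalf - 3*(Y - Y₁)*hY
  -- part 2 : choose exponent k
  set k : ℤ := m + 2*Y^2*(m.natAbs : ℤ) with hk
  have ham : (1:ℤ) ≤ (m.natAbs : ℤ) := by
    have : m ≠ 0 := by omega
    have := Int.natAbs_pos.mpr this
    exact_mod_cast this
  have habs : m ≤ (m.natAbs:ℤ) ∧ -m ≤ (m.natAbs:ℤ) := by
    constructor
    · exact Int.le_natAbs
    · rw [← Int.natAbs_neg]; exact Int.le_natAbs
  have hY2 : 1 ≤ Y^2 := by
    have : 1 ≤ Y₁^2 := by nlinarith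
    rw [hY]; nlinarith
  have hk1 : 1 ≤ k := by
    rw [hk]
    nlinarith [habs.1, habs.2, ham, hY2]
  have hkodd : k = 2*(z₀ + Y^2*(m.natAbs:ℤ)) + 1 := by rw [hk, hm]; ring
  set K : ℕ := k.toNat with hK
  have hKk : (K:ℤ) = k := Int.toNat_of_nonneg (by omega)
  have hK1 : 1 ≤ K := by omega
  set K' : ℕ := K - 1 with hK'
  have hKK' : K = K' + 1 := by omega
  -- K' is even
  have hhalfK : ∃ H : ℕ, K' = 2*H := by
    have h1 : (K':ℤ) = k - 1 := by omega
    refine ⟨(z₀ + Y^2*(m.natAbs:ℤ)).toNat, ?_⟩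
    have h2 : (0:ℤ) ≤ z₀ + Y^2*(m.natAbs:ℤ) := by omega
    have h3 : ((z₀ + Y^2*(m.natAbs:ℤ)).toNat : ℤ) = z₀ + Y^2*(m.natAbs:ℤ) := Int.toNat_of_nonneg h2
    omega
  obtain ⟨H, hH⟩ := hhalfK
  -- expand (e3^n)^K
  obtain ⟨c₁, c₂, hre, him⟩ := pow_form (e3^n) K'
  rw [← hKK'] at hre him
  set W : ℤ := ((e3^n)^K).re with hW
  set B : ℤ := ((e3^n)^K).im with hB
  have hpell2 : W^2 - 3*B^2 = 1 := by
    have := e3_pell (n*K)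
    rwa [pow_mul] at this
  -- B = q * Y₁
  set q : ℤ := k*X^K' + Y₁^2*c₂ with hq
  have hcoef : ((K':ℤ)+1) = k := by omega
  have hBq : B = q * Y₁ := by
    rw [him]
    linear_combination (X^K'*Y₁)*hcoef - Y₁*hq
  -- Y ∣ m - q
  have hqm : q ≡ m [ZMOD Y] := by
    have h1 : k ≡ m [ZMOD Y] := by
      have : Y ∣ k - m := ⟨2*Y*(m.natAbs:ℤ), by rw [hk]; ring⟩
      exact (Int.modEq_iff_dvd.mpr (by simpa using this)).symm
    have h2 : X^K' ≡ 1 [ZMOD Y] := by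
      have hX2 : X^2 ≡ 1 [ZMOD Y] := by
        have : Y ∣ X^2 - 1 := ⟨-3*Y₁, by rw [hY]; linear_combination hpell⟩
        exact (Int.modEq_iff_dvd.mpr (by simpa using this)).symm
      calc X^K' = (X^2)^H := by rw [hH, pow_mul]
      _ ≡ 1^H [ZMOD Y] := hX2.pow H
      _ = 1 := one_pow H
    have h3 : Y₁^2*c₂ ≡ 0 [ZMOD Y] := by
      have : Y ∣ Y₁^2*c₂ := ⟨-Y₁*c₂, by rw [hY]; ring⟩
      exact (Int.modEq_zero_iff_dvd).mpr this
    calc q = k*X^K' + Y₁^2*c₂ := hq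
    _ ≡ m*1 + 0 [ZMOD Y] := (h1.mul h2).add h3
    _ = m := by ring
  obtain ⟨x', hx'⟩ : Y ∣ m - q := (Int.ModEq.dvd hqm)
  refine ⟨c, W, x', Y, hcne, hE1, ?_⟩
  have hmq : m - x'*Y = q := by linear_combination hx'
  have hYq : Y*q = -B := by linear_combination q*hY + hBq
  rw [hmq]
  linear_combination hpell2 + 3*(B - Y*q)*hYq

theorem stmt_7 (z : GaussianInt) :
    z.im = 0 ↔ ∃ v w x y : GaussianInt, v ≠ 0 ∧
      (4*(2*v*(2*(2*z+1)^2+1) - y)^2 - 3*y^2 - 1)^2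
        + 2*(w^2 - 1 - 3*y^2*(2*z+1 - x*y)^2)^2 = 0 := by
  constructor
  · intro hz
    obtain ⟨c, W, x', Y, hc, h1, h2⟩ := forward_int z.re
    refine ⟨(c : GaussianInt), (W : GaussianInt), (x' : GaussianInt), (Y : GaussianInt),
      ?_, ?_⟩
    · exact_mod_cast hc
    · have hzc : z = ((z.re : ℤ) : GaussianInt) := by ext <;> simp [hz]
      rw [hzc]
      have := congrArg (fun t : ℤ => ((t : GaussianInt))) (show
        (4*(2*c*(2*(2*z.re+1)^2+1) - Y)^2 - 3*Y^2 - 1)^2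
          + 2*(W^2 - 1 - 3*Y^2*((2*z.re+1) - x'*Y)^2)^2 = 0 from by
        rw [h1, h2]; ring)
      push_cast at this
      convert this using 2
  · rintro ⟨v, w, x, y, hv, h⟩
    exact backward z v w x y hv h
end

section
/- For every rational integer z there exist rational integers v, w, x, y with v \ne 0 such that 4*(2*v*(2*(2z+1)^2+1) - y)^2 = 3*y^2 + 1 and w^2 = 1 + 3*y^2*(2z+1 - x*y)^2. -/
open Pell

lemma Xrec (n : ℕ) : (Pell.xn one_lt_two (n+1) : ℤ) = 2*(Pell.xn one_lt_two n) + 3*(Pell.yn one_lt_two n) := by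
  have h := Pell.xz_succ one_lt_two n
  rw [Pell.dz_val] at h
  simp only [Pell.az, Pell.xz, Pell.yz] at h
  push_cast at h
  linarith

lemma Yrec (n : ℕ) : (Pell.yn one_lt_two (n+1) : ℤ) = (Pell.xn one_lt_two n) + 2*(Pell.yn one_lt_two n) := by
  have h := Pell.yz_succ one_lt_two n
  simp only [Pell.az, Pell.xz, Pell.yz] at h
  push_cast at h
  linarith

lemma periodic (M : ℕ) (hM : 0 < M) :
    ∃ p : ℕ, 1 ≤ p ∧ (M:ℤ) ∣ (Pell.xn one_lt_two (p+1) : ℤ) - 2 ∧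
      (M:ℤ) ∣ (Pell.yn one_lt_two (p+1) : ℤ) - 1 := by
  haveI : NeZero M := ⟨hM.ne'⟩
  set g : ℕ → ZMod M × ZMod M := fun n =>
    (((Pell.xn one_lt_two n : ℤ) : ZMod M), ((Pell.yn one_lt_two n : ℤ) : ZMod M)) with hg
  have fwd : ∀ n m, g n = g m → g (n+1) = g (m+1) := by
    intro n m h
    simp only [hg, Prod.mk.injEq] at h ⊢
    obtain ⟨h1, h2⟩ := h
    push_cast at h1 h2
    constructor
    · rw [Xrec, Xrec]; push_cast; rw [h1, h2]
    · rw [Yrec, Yrec]; push_cast; rw [h1, h2]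
  have back : ∀ n m, g (n+1) = g (m+1) → g n = g m := by
    intro n m h
    simp only [hg, Prod.mk.injEq] at h ⊢
    obtain ⟨h1, h2⟩ := h
    have ex : ∀ j : ℕ, (Pell.xn one_lt_two j : ℤ) = 2*(Pell.xn one_lt_two (j+1)) - 3*(Pell.yn one_lt_two (j+1)) := by
      intro j; rw [Xrec, Yrec]; ring
    have ey : ∀ j : ℕ, (Pell.yn one_lt_two j : ℤ) = 2*(Pell.yn one_lt_two (j+1)) - (Pell.xn one_lt_two (j+1)) := by
      intro j; rw [Xrec, Yrec]; ring
    push_cast at h1 h2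
    constructor
    · rw [ex n, ex m]; push_cast; rw [h1, h2]
    · rw [ey n, ey m]; push_cast; rw [h1, h2]
  obtain ⟨i, j, hne, hij⟩ := Finite.exists_ne_map_eq_of_infinite g
  -- wlog i < j
  obtain ⟨a, b, hab, heq⟩ : ∃ a b, a < b ∧ g a = g b := by
    rcases lt_or_gt_of_ne hne with h | h
    · exact ⟨i, j, h, hij⟩
    · exact ⟨j, i, h, hij.symm⟩
  obtain ⟨p, hp⟩ : ∃ p, b = a + p := ⟨b - a, by omega⟩
  have hp1 : 1 ≤ p := by omega
  subst hp
  have key : ∀ n, g n = g (n + p) → g 0 = g p := by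
    intro n
    induction n with
    | zero => intro h; simpa using h
    | succ n ih => intro h; exact ih (back _ _ (by simpa [Nat.add_right_comm] using h))
  have h0p : g 0 = g p := key a heq
  have h1 : g 1 = g (p+1) := fwd 0 p h0p
  simp only [hg, Prod.mk.injEq] at h1
  obtain ⟨hx, hy⟩ := h1
  have hmod := (ZMod.intCast_eq_intCast_iff _ _ _).mp hx
  have hmody := (ZMod.intCast_eq_intCast_iff _ _ _).mp hy
  have hx1 : (Pell.xn one_lt_two 1 : ℤ) = 2 := by rw [Pell.xn_one]; norm_num
  have hy1 : (Pell.yn one_lt_two 1 : ℤ) = 1 := by rw [Pell.yn_one]; norm_num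
  refine ⟨p, hp1, ?_, ?_⟩
  · have := hmod.dvd
    rwa [hx1] at this
  · have := hmody.dvd
    rwa [hy1] at this

lemma Xsq (n : ℕ) : (Pell.xn one_lt_two n : ℤ)^2 = 3*(Pell.yn one_lt_two n : ℤ)^2 + 1 := by
  have h := Pell.pell_eqz one_lt_two n
  rw [Pell.dz_val] at h
  simp only [Pell.az, Pell.xz, Pell.yz] at h
  push_cast at h
  nlinarith [h]

theorem stmt_9 (z : ℤ) :
    ∃ v w x y : ℤ, v ≠ 0 ∧
      4*(2*v*(2*(2*z+1)^2+1) - y)^2 = 3*y^2 + 1 ∧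
      w^2 = 1 + 3*y^2*(2*z+1 - x*y)^2 := by
  set c : ℤ := 2*z+1 with hc
  set NZ : ℤ := 2*c^2+1 with hNZ
  have hN3 : 3 ≤ NZ := by
    have h0 : 0 ≤ z*(z+1) := by
      rcases le_or_gt 0 z with h | h
      · exact mul_nonneg h (by linarith)
      · nlinarith
    have h1 : c^2 = 4*z^2+4*z+1 := by rw [hc]; ring
    nlinarith [h0, h1]
  set M : ℕ := (4*NZ).toNat with hM
  have hMZ : (M:ℤ) = 4*NZ := Int.toNat_of_nonneg (by linarith)
  have hMpos : 0 < M := by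
    by_contra h
    push_neg at h
    (interval_cases M; omega)
  obtain ⟨p, hp1, hdx, hdy⟩ := periodic M hMpos
  set k : ℕ := p+1 with hk
  set x : ℤ := (Pell.xn one_lt_two k : ℤ) with hxdef
  set y : ℤ := (Pell.yn one_lt_two k : ℤ) with hydef
  have hP : x^2 = 3*y^2+1 := Xsq k
  have hy4 : (4:ℤ) ≤ y := by
    have h2 : Pell.yn one_lt_two 2 ≤ Pell.yn one_lt_two k :=
      (Pell.strictMono_y one_lt_two).monotone (by omega)
    have h4 : Pell.yn one_lt_two 2 = 4 := rfl
    rw [hydef]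
    exact_mod_cast h4 ▸ h2
  rw [hMZ] at hdx hdy
  have hyodd : y % 2 = 1 := by
    obtain ⟨u, hu⟩ := hdy
    have h2 : (2:ℤ) ∣ y - 1 := ⟨2*NZ*u, by rw [hu]; ring⟩
    omega
  obtain ⟨v, hv⟩ : (4*NZ) ∣ 2*y - x := by
    have h1 : (4*NZ) ∣ (2*(y-1) - (x-2)) := dvd_sub (hdy.mul_left 2) hdx
    have h2 : 2*(y-1) - (x-2) = 2*y - x := by ring
    rwa [h2] at h1
  have hvne : v ≠ 0 := by
    rintro rfl
    rw [mul_zero] at hv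
    have hx2y : x = 2*y := by linarith
    nlinarith
  have hy0 : y ≠ 0 := by linarith
  obtain ⟨sZ, hs0, hs2, hsc⟩ : ∃ sZ : ℤ, 0 ≤ sZ ∧ sZ % 2 = 1 ∧ y ∣ sZ - c := by
    have hr0 : 0 ≤ c % y := Int.emod_nonneg c hy0
    have hdc : y ∣ c % y - c := by
      refine ⟨-(c / y), ?_⟩
      rw [Int.emod_def]
      ring
    rcases Int.emod_two_eq (c % y) with h | h
    · refine ⟨c % y + y, by linarith, by omega, ?_⟩
      obtain ⟨u, hu⟩ := hdc
      exact ⟨u + 1, by linarith⟩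
    · exact ⟨c % y, hr0, h, hdc⟩
  set s : ℕ := sZ.toNat with hsdef
  have hsZ : (s:ℤ) = sZ := Int.toNat_of_nonneg hs0
  have hsodd : s % 2 = 1 := by omega
  have hst : s - 1 = 2 * (s / 2) := by omega
  obtain ⟨T, hT⟩ := Pell.y_mul_dvd one_lt_two k s
  have hTz : y * (T:ℤ) = (Pell.yn one_lt_two (k*s) : ℤ) := by
    rw [hydef]
    exact_mod_cast congrArg (Nat.cast (R := ℤ)) hT.symm
  have hmod := (Pell.xy_modEq_yn one_lt_two k s).2
  have hmodZ : (y^3:ℤ) ∣ (s:ℤ) * x^(s-1) * y - y*(T:ℤ) := by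
    rw [hTz, hydef, hxdef]
    have hd := hmod.dvd
    push_cast at hd
    exact_mod_cast hd
  have hysq : (y^2 : ℤ) ∣ (s:ℤ) * x^(s-1) - T := by
    have h3 : (y^3 : ℤ) = y * y^2 := by ring
    have h4 : (s : ℤ) * x^(s-1) * y - y * T = y * ((s:ℤ) * x^(s-1) - T) := by ring
    rw [h3, h4] at hmodZ
    exact (mul_dvd_mul_iff_left hy0).mp hmodZ
  have hyT : y ∣ (s:ℤ) * x^(s-1) - T :=
    dvd_trans ⟨y, by ring⟩ hysq
  have hxpow : y ∣ x^(s-1) - 1 := by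
    have h2 : x^(s-1) = (x^2)^(s/2) := by rw [← pow_mul, ← hst]
    have h3 : (x^2:ℤ) ≡ 1 [ZMOD y] := (Int.modEq_iff_dvd.mpr ⟨3*y, by linarith⟩).symm
    have h4 := h3.pow (s/2)
    rw [← h2] at h4
    have h5 := h4.dvd
    rw [one_pow] at h5
    exact dvd_sub_comm.mp h5
  have hTc : y ∣ c - (T:ℤ) := by
    rw [hsZ] at hyT
    obtain ⟨a1, e1⟩ := hyT
    obtain ⟨a2, e2⟩ := hxpow
    obtain ⟨a3, e3⟩ := hsc
    refine ⟨-a3 + a1 - sZ*a2, ?_⟩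
    linear_combination e1 - sZ*e2 - e3
  obtain ⟨Xx, hXx⟩ := hTc
  refine ⟨v, (Pell.xn one_lt_two (k*s) : ℤ), Xx, y, hvne, ?_, ?_⟩
  · have hx2 : x = 2*y - 4*NZ*v := by linarith
    rw [hx2] at hP
    linear_combination hP
  · have hcT : c - Xx*y = (T:ℤ) := by linear_combination hXx
    rw [hcT]
    have h6 := Xsq (k*s)
    rw [← hTz] at h6
    linear_combination h6
end

section
/- Let u_n = u_n(4,1). For all natural numbers n and k, u_{kn} \equiv k * (u_{n+1} - 4*u_n)^{k-1} * u_n (mod u_n^2). -/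
lemma lucasU_add (a b : ℕ) : lucasU 4 1 (a+b+1) =
    lucasU 4 1 (a+1) * lucasU 4 1 (b+1) - lucasU 4 1 a * lucasU 4 1 b := by
  induction a using Nat.twoStepInduction with
  | zero => simp [lucasU]
  | one =>
      rw [show 1+b+1 = b+2 from by omega]
      show 4 * lucasU 4 1 (b+1) - 1 * lucasU 4 1 b = _
      simp [lucasU]
  | more a ih1 ih2 =>
      have h1 : a + 2 + b + 1 = (a + b + 1) + 2 := by omega
      have h2 : a + 1 + b + 1 = (a + b + 1) + 1 := by omega
      rw [h1, show lucasU 4 1 ((a+b+1)+2) = 4 * lucasU 4 1 ((a+b+1)+1) - 1 * lucasU 4 1 (a+b+1) from rfl,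
        ← h2, ih2, ih1,
        show lucasU 4 1 (a+3) = 4 * lucasU 4 1 (a+2) - 1 * lucasU 4 1 (a+1) from rfl,
        show lucasU 4 1 (a+2) = 4 * lucasU 4 1 (a+1) - 1 * lucasU 4 1 a from rfl]
      ring

theorem stmt_11 (n k : ℕ) (hk : 1 ≤ k) :
    lucasU 4 1 (k*n) ≡
      (k : ℤ) * (lucasU 4 1 (n+1) - 4 * lucasU 4 1 n)^(k-1) * lucasU 4 1 n
      [ZMOD (lucasU 4 1 n)^2] := by
  rcases n with _ | j
  · simp [lucasU, Int.ModEq]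
  set u : ℤ := lucasU 4 1 (j+1) with hu
  set c : ℤ := lucasU 4 1 (j+1+1) - 4 * lucasU 4 1 (j+1) with hc
  have hcj : lucasU 4 1 j = -c := by
    have h : lucasU 4 1 (j+2) = 4 * lucasU 4 1 (j+1) - 1 * lucasU 4 1 j := rfl
    rw [hc, h]; ring
  have hn1 : lucasU 4 1 (j+1+1) ≡ c [ZMOD u] := by
    refine Int.modEq_iff_dvd.mpr ⟨-4, ?_⟩
    rw [hc]; ring
  have key : ∀ m, 1 ≤ m → lucasU 4 1 (m*(j+1)) ≡ (m:ℤ) * c^(m-1) * u [ZMOD u^2] ∧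
      lucasU 4 1 (m*(j+1)+1) ≡ c^m [ZMOD u] := by
    intro m hm
    induction m, hm using Nat.le_induction with
    | base =>
        constructor
        · simp [one_mul]
          exact Int.ModEq.refl _
        · simpa using hn1
    | succ m hm ih =>
        obtain ⟨ih1, ih2⟩ := ih
        have hsplit : (m+1)*(j+1) = m*(j+1) + j + 1 := by ring
        have hadd := lucasU_add (m*(j+1)) j
        rw [hcj] at hadd
        constructor
        · rw [hsplit, hadd]
          have hm1 : m - 1 + 1 = m := by omega
          have e1 : lucasU 4 1 (m*(j+1)+1) * lucasU 4 1 (j+1) ≡ c^m * u [ZMOD u^2] := by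
            have h := ih2.mul_right' (c := u)
            rw [← sq] at h
            exact h
          have e2 := ih1.mul_right (-c)
          have e3 := e1.sub e2
          have heq : c^m * u - (m:ℤ)*c^(m-1)*u*(-c) = ((m+1:ℕ):ℤ) * c^((m+1)-1) * u := by
            obtain ⟨t, rfl⟩ : ∃ t, m = t + 1 := ⟨m-1, by omega⟩
            simp only [Nat.add_sub_cancel]
            push_cast
            rw [pow_succ]
            ring
          rw [heq] at e3
          exact e3
        · have hsplit2 : (m+1)*(j+1)+1 = m*(j+1) + (j+1) + 1 := by ring
          rw [hsplit2, lucasU_add (m*(j+1)) (j+1)]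
          have e1 : lucasU 4 1 (m*(j+1)+1) * lucasU 4 1 (j+1+1) ≡ c^m * c [ZMOD u] := ih2.mul hn1
          have e2 : lucasU 4 1 (m*(j+1)) * lucasU 4 1 (j+1) ≡ 0 [ZMOD u] :=
            (Int.modEq_zero_iff_dvd).mpr ⟨lucasU 4 1 (m*(j+1)), by rw [← hu]; ring⟩
          have := e1.sub e2
          simpa [pow_succ] using this
  have h := (key k hk).1
  simpa using h
end

section
/- Let y and y_* be Gaussian integers satisfying y_*^2 - 4*y_*y + y^2 = 1 and suppose |y_*| \ge 8 (as a complex absolute value). Then y and y_* are rational integers with |y| > |y_*|/4. -/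
lemma sq_ne_two (b : ℤ) : b^2 ≠ 2 := by
  intro h
  have h1 : b ≤ 2 := by nlinarith
  have h2 : -2 ≤ b := by nlinarith
  interval_cases b <;> norm_num at h

lemma small_case (a b c d : ℤ) (hC : c^2 + d^2 ≤ 2)
    (heq : a^2 - b^2 - 3*c^2 + 3*d^2 = 1) (him : a*b = 3*(c*d)) :
    b = 0 ∧ d = 0 := by
  have hc1 : -1 ≤ c ∧ c ≤ 1 := by constructor <;> nlinarith [sq_nonneg d]
  have hd1 : -1 ≤ d ∧ d ≤ 1 := by constructor <;> nlinarith [sq_nonneg c]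
  obtain ⟨hc1, hc2⟩ := hc1; obtain ⟨hd1, hd2⟩ := hd1
  have key : d = 0 → b = 0 := by
    intro hd0; subst hd0
    have h0 : a * b = 0 := by rw [him]; ring
    rcases mul_eq_zero.mp h0 with h0 | h0
    · exfalso; subst h0; nlinarith [sq_nonneg b, sq_nonneg c]
    · exact h0
  interval_cases c <;> interval_cases d
  -- c=-1,d=-1
  · exfalso
    have hab : (a*b)^2 = 9 := by rw [him]; norm_num
    have heq' : a^2 = b^2 + 1 := by linarith
    have hb : b^2 ≤ 2 ∨ 3 ≤ b^2 := by omega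
    rcases hb with hb | hb
    · nlinarith [sq_nonneg a, sq_nonneg b]
    · have ha : 4 ≤ a^2 := by linarith
      nlinarith [sq_nonneg a, sq_nonneg b]
  · exact ⟨key rfl, rfl⟩
  · exfalso
    have hab : (a*b)^2 = 9 := by rw [him]; norm_num
    have heq' : a^2 = b^2 + 1 := by linarith
    have hb : b^2 ≤ 2 ∨ 3 ≤ b^2 := by omega
    rcases hb with hb | hb
    · nlinarith [sq_nonneg a, sq_nonneg b]
    · have ha : 4 ≤ a^2 := by linarith
      nlinarith [sq_nonneg a, sq_nonneg b]
  -- c=0,d=-1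
  · exfalso
    have h0 : a * b = 0 := by rw [him]; ring
    rcases mul_eq_zero.mp h0 with h0 | h0 <;> subst h0
    · exact sq_ne_two b (by linarith)
    · nlinarith [sq_nonneg a]
  · exact ⟨key rfl, rfl⟩
  · exfalso
    have h0 : a * b = 0 := by rw [him]; ring
    rcases mul_eq_zero.mp h0 with h0 | h0 <;> subst h0
    · exact sq_ne_two b (by linarith)
    · nlinarith [sq_nonneg a]
  -- c=1
  · exfalso
    have hab : (a*b)^2 = 9 := by rw [him]; norm_num
    have heq' : a^2 = b^2 + 1 := by linarith
    have hb : b^2 ≤ 2 ∨ 3 ≤ b^2 := by omega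
    rcases hb with hb | hb
    · nlinarith [sq_nonneg a, sq_nonneg b]
    · have ha : 4 ≤ a^2 := by linarith
      nlinarith [sq_nonneg a, sq_nonneg b]
  · exact ⟨key rfl, rfl⟩
  · exfalso
    have hab : (a*b)^2 = 9 := by rw [him]; norm_num
    have heq' : a^2 = b^2 + 1 := by linarith
    have hb : b^2 ≤ 2 ∨ 3 ≤ b^2 := by omega
    rcases hb with hb | hb
    · nlinarith [sq_nonneg a, sq_nonneg b]
    · have ha : 4 ≤ a^2 := by linarith
      nlinarith [sq_nonneg a, sq_nonneg b]
lemma key_lemma : ∀ n : ℕ, ∀ a b c d : ℤ, a^2 + b^2 + c^2 + d^2 ≤ (n:ℤ) →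
    a^2 - b^2 - 3*c^2 + 3*d^2 = 1 → a*b = 3*(c*d) → b = 0 ∧ d = 0 := by
  intro n
  induction n with
  | zero =>
    intro a b c d hn heq him
    norm_num at hn
    exact small_case a b c d (by nlinarith [sq_nonneg a, sq_nonneg b, sq_nonneg c, sq_nonneg d]) heq him
  | succ n ih =>
    intro a b c d hn heq him
    rcases le_or_gt (c^2 + d^2) 2 with hC | hC
    · exact small_case a b c d hC heq him
    · -- descent
      have hC3 : 3 ≤ c^2 + d^2 := hC
      have hAsq : (a^2+b^2)^2 = (1+3*c^2-3*d^2)^2 + 36*(c*d)^2 := by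
        linear_combination (a^2 - b^2 + 1 + 3*c^2 - 3*d^2) * heq + (4*a*b + 12*(c*d)) * him
      have hA : a^2 + b^2 ≤ 3*(c^2+d^2) + 1 := by
        nlinarith [hAsq, sq_nonneg d, sq_nonneg (c*d), sq_nonneg a, sq_nonneg b, sq_nonneg c,
          sq_nonneg (a^2+b^2 + 3*c^2+3*d^2+1)]
      have hid : (a*c+b*d)^2 - (b*c-a*d)^2 = (c^2-d^2) + 3*(c^2+d^2)^2 := by
        linear_combination (c^2-d^2)*heq + 4*(c*d)*him
      have hRe : 3*(c^2+d^2)^2 - (c^2+d^2) ≤ (a*c+b*d)^2 := by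
        nlinarith [hid, sq_nonneg (b*c-a*d), sq_nonneg c]
      have hApos : (0:ℤ) ≤ a^2+b^2 := by positivity
      have e1 : (0:ℤ) ≤ 3*(c^2+d^2)+1-(a^2+b^2) := by linarith
      have e2 : (0:ℤ) ≤ 9*(c^2+d^2)+1+(a^2+b^2) := by positivity
      have e3 : (0:ℤ) ≤ (c^2+d^2-3)*(c^2+d^2) := mul_nonneg (by linarith) (by positivity)
      have h16 : (a^2+b^2+3*(c^2+d^2))^2 < 16*(a*c+b*d)^2 := by
        nlinarith [hRe, mul_nonneg e1 e2, e3]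
      have h16' : (a^2+b^2+3*(c^2+d^2))^2 < (4*|a*c+b*d|)^2 := by
        calc (a^2+b^2+3*(c^2+d^2))^2 < 16*(a*c+b*d)^2 := h16
        _ = (4*|a*c+b*d|)^2 := by rw [mul_pow, sq_abs]; ring
      have hkey : a^2+b^2 + 3*(c^2+d^2) < 4*|a*c+b*d| := by
        exact lt_of_pow_lt_pow_left₀ 2 (by positivity) h16'
      rcases le_or_gt 0 (a*c+b*d) with hs | hs
      · have habs : |a*c+b*d| = a*c+b*d := abs_of_nonneg hs
        rw [habs] at hkey
        have heq' : (2*a-3*c)^2 - (2*b-3*d)^2 - 3*(2*c-a)^2 + 3*(2*d-b)^2 = 1 := by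
          linear_combination heq
        have him' : (2*a-3*c)*(2*b-3*d) = 3*((2*c-a)*(2*d-b)) := by
          linear_combination him
        have hsum : (2*a-3*c)^2 + (2*b-3*d)^2 + (2*c-a)^2 + (2*d-b)^2 ≤ (n:ℤ) := by
          push_cast at hn ⊢
          linarith [hkey]
        obtain ⟨hb', hd'⟩ := ih (2*a-3*c) (2*b-3*d) (2*c-a) (2*d-b) hsum heq' him'
        constructor <;> omega
      · have habs : |a*c+b*d| = -(a*c+b*d) := abs_of_neg hs
        rw [habs] at hkey
        have heq' : (2*a+3*c)^2 - (2*b+3*d)^2 - 3*(2*c+a)^2 + 3*(2*d+b)^2 = 1 := by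
          linear_combination heq
        have him' : (2*a+3*c)*(2*b+3*d) = 3*((2*c+a)*(2*d+b)) := by
          linear_combination him
        have hsum : (2*a+3*c)^2 + (2*b+3*d)^2 + (2*c+a)^2 + (2*d+b)^2 ≤ (n:ℤ) := by
          push_cast at hn ⊢
          linarith [hkey]
        obtain ⟨hb', hd'⟩ := ih (2*a+3*c) (2*b+3*d) (2*c+a) (2*d+b) hsum heq' him'
        constructor <;> omega
lemma int_ineq (p q : ℤ) (heq : p^2 - 4*p*q + q^2 = 1) (hp : 64 ≤ p^2) :
    p^2 < 16*q^2 := by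
  have hq2 : 2 ≤ q^2 := by
    by_contra hq
    push_neg at hq
    have hq1 : q^2 ≤ 1 := by omega
    have h4 : 4*p*q = p^2 + q^2 - 1 := by linarith
    nlinarith [sq_nonneg (p*q), sq_nonneg q, sq_nonneg p, sq_nonneg (p^2 - 17)]
  have hu : (p-2*q)^2 = 3*q^2 + 1 := by linear_combination heq
  have h1 : 4*(p-2*q)*q < 9*q^2 - 1 := by
    nlinarith [hu, hq2, sq_nonneg (4*(p-2*q)*q + (9*q^2-1)), sq_nonneg q, sq_nonneg (q^2-2)]
  nlinarith [hu, h1]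

theorem stmt_16 (y ystar : GaussianInt)
    (h : ystar^2 - 4*ystar*y + y^2 = 1)
    (habs : 8 ≤ ‖ystar.toComplex‖) :
    y.im = 0 ∧ ystar.im = 0 ∧
      ‖y.toComplex‖ > ‖ystar.toComplex‖ / 4 := by
  have h1 := congrArg Zsqrtd.re h
  have h2 := congrArg Zsqrtd.im h
  simp [Zsqrtd.re_mul, Zsqrtd.im_mul, pow_two] at h1 h2
  set p := ystar.re with hp'; set P := ystar.im with hP'
  set q := y.re with hq'; set Q := y.im with hQ'
  have heq : (p-2*q)^2 - (P-2*Q)^2 - 3*q^2 + 3*Q^2 = 1 := by linear_combination h1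
  have him2 : 2*((p-2*q)*(P-2*Q)) = 2*(3*(q*Q)) := by linear_combination h2
  have him : (p-2*q)*(P-2*Q) = 3*(q*Q) := by omega
  set m : ℤ := (p-2*q)^2 + (P-2*Q)^2 + q^2 + Q^2 with hm
  obtain ⟨hb, hd⟩ := key_lemma m.toNat (p-2*q) (P-2*Q) q Q (by
    rw [hm]; exact_mod_cast Int.self_le_toNat m) heq him
  have hQ : Q = 0 := hd
  have hP : P = 0 := by omega
  refine ⟨hQ, hP, ?_⟩
  have hyc : GaussianInt.toComplex y = ((q:ℤ):ℂ) := by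
    rw [GaussianInt.toComplex_def, ← hq', ← hQ', hQ]; push_cast; ring
  have hsc : GaussianInt.toComplex ystar = ((p:ℤ):ℂ) := by
    rw [GaussianInt.toComplex_def, ← hp', ← hP', hP]; push_cast; ring
  rw [hsc] at habs
  rw [Complex.norm_intCast] at habs
  rw [hyc, hsc, Complex.norm_intCast, Complex.norm_intCast]
  have hp64 : (64:ℤ) ≤ p^2 := by
    have h8 : (8:ℤ) ≤ |p| := by exact_mod_cast (by push_cast [Int.cast_abs] at habs ⊢; exact habs : (8:ℝ) ≤ ((|p|:ℤ):ℝ))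
    nlinarith [sq_abs p, abs_nonneg p]
  have heqi : p^2 - 4*p*q + q^2 = 1 := by
    rw [hQ, hP] at heq him; nlinarith [heq, him]
  have hfin : p^2 < 16*q^2 := int_ineq p q heqi hp64
  have h4 : |p| < 4*|q| := by nlinarith [sq_abs p, sq_abs q, abs_nonneg p, abs_nonneg q]
  rw [gt_iff_lt, div_lt_iff₀ (by norm_num : (0:ℝ) < 4)]
  calc |(p:ℝ)| = ((|p|:ℤ):ℝ) := by push_cast [Int.cast_abs]; ring
  _ < ((4*|q|:ℤ):ℝ) := by exact_mod_cast h4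
  _ = |(q:ℝ)| * 4 := by push_cast [Int.cast_abs]; ring
end

section
/- Let u_n = u_n(4,1), let z be a rational integer, and let k = |2z+1|. Suppose n is a natural number with 4*(2k^2+1) dividing u_{n+1}, and write u_{n+1} = 4*(2k^2+1)*v, y = u_n. Then 4*(2*v*(2k^2+1) - y)^2 = 3*y^2 + 1. -/
lemma lucas_id (n : ℕ) :
    lucasU 4 1 (n+1)^2 - 4 * lucasU 4 1 (n+1) * lucasU 4 1 n + lucasU 4 1 n^2 = 1 := by
  induction n with
  | zero => simp [lucasU]
  | succ m ih =>
    have h : lucasU 4 1 (m+2) = 4 * lucasU 4 1 (m+1) - 1 * lucasU 4 1 m := rfl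
    rw [h]; ring_nf; ring_nf at ih; linarith

theorem stmt_19 (z k v y : ℤ) (n : ℕ)
    (hk : k = |2*z + 1|)
    (hv : lucasU 4 1 (n+1) = 4*(2*k^2+1)*v)
    (hy : y = lucasU 4 1 n) :
    4*(2*v*(2*k^2+1) - y)^2 = 3*y^2 + 1 := by
  have h := lucas_id n
  rw [hv, ← hy] at h
  nlinarith [h]
end
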